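/- The tilted mean ū is differentiable on ℝ^d, and its Jacobian matrix equals (β/s²) times the covariance matrix of the tilted measure: for every x ∈ ℝ^d, Dū(x) = (β/s²) ( ∫ u uᵀ dκ_x(u) − ū(x) ū(x)ᵀ ). -/

import Mathlib

open MeasureTheory Real
open scoped RealInnerProductSpace

noncomputable section
set_option maxHeartbeats 1000000
set_option synthInstance.maxHeartbeats 200000

/-- derivative of the posterior mean equals scaled posterior covariance,
the computation behind Lemma D.3 of the paper. With `ν` a probability measure supported
in the unit cube, `s² = α² + σ²β² > 0`, weight `w(x,u) = exp(-‖x - βu‖²/(2s²))` and tilted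
mean `ū(x) = (∫ w(x,u) dν(u))⁻¹ ∫ w(x,u) u dν(u)`, the map `ū` is differentiable and its
Jacobian, applied to a vector `y`, equals `(β/s²)` times the covariance of the tilted
measure `κ_x` applied to `y`:
`Dū(x) y = (β/s²) ( (∫ w(x,u) dν)⁻¹ ∫ w(x,u) ⟪u,y⟫ u dν - ⟪ū(x), y⟫ ū(x) )`. -/
theorem jacobian_of_tilted_mean
    {d : ℕ} (hd : 1 ≤ d) (σ : ℝ) (hσ : 0 < σ)
    (ν : Measure (EuclideanSpace ℝ (Fin d))) [IsProbabilityMeasure ν]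
    (hνsupp : ∀ᵐ u ∂ν, ∀ i, u i ∈ Set.Icc (0 : ℝ) 1)
    (α β : ℝ) (s2 : ℝ) (hs2 : s2 = α ^ 2 + σ ^ 2 * β ^ 2) (hs2pos : 0 < s2)
    (w : EuclideanSpace ℝ (Fin d) → EuclideanSpace ℝ (Fin d) → ℝ)
    (hw : ∀ x u, w x u = Real.exp (-‖x - β • u‖ ^ 2 / (2 * s2)))
    (ubar : EuclideanSpace ℝ (Fin d) → EuclideanSpace ℝ (Fin d))
    (hubar : ∀ x, ubar x = (∫ u, w x u ∂ν)⁻¹ • ∫ u, w x u • u ∂ν) :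
    Differentiable ℝ ubar ∧
      ∀ x y : EuclideanSpace ℝ (Fin d),
        fderiv ℝ ubar x y =
          (β / s2) •
            ((∫ u, w x u ∂ν)⁻¹ • (∫ u, (w x u * ⟪u, y⟫) • u ∂ν)
              - ⟪ubar x, y⟫ • ubar x) := by
  have hwpos : ∀ x u, 0 < w x u := fun x u => by rw [hw]; exact Real.exp_pos _
  have hwle : ∀ x u, w x u ≤ 1 := by
    intro x u
    rw [hw, Real.exp_le_one_iff]
    apply div_nonpos_of_nonpos_of_nonneg
    · simpa using sq_nonneg _
    · positivity
  set R : ℝ := Real.sqrt d with hR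
  have hRnn : 0 ≤ R := Real.sqrt_nonneg _
  have hnorm : ∀ᵐ u ∂ν, ‖u‖ ≤ R := by
    filter_upwards [hνsupp] with u hu
    rw [EuclideanSpace.norm_eq]
    apply Real.sqrt_le_sqrt
    have key : ∀ i, ‖u i‖ ^ 2 ≤ 1 := by
      intro i
      have h1 : |u i| ≤ 1 := abs_le.2 ⟨by linarith [(hu i).1], (hu i).2⟩
      rw [Real.norm_eq_abs]
      nlinarith [abs_nonneg (u i)]
    calc ∑ i, ‖u i‖ ^ 2 ≤ ∑ _i : Fin d, (1 : ℝ) :=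
          Finset.sum_le_sum fun i _ => key i
      _ = (d : ℝ) := by simp
  have hwcont : ∀ x, Continuous (fun u => w x u) := by
    intro x
    have hc : Continuous fun u : EuclideanSpace ℝ (Fin d) =>
        Real.exp (-‖x - β • u‖ ^ 2 / (2 * s2)) := by fun_prop
    convert hc using 1
    funext u
    rw [hw]
  set Dw : EuclideanSpace ℝ (Fin d) → EuclideanSpace ℝ (Fin d) →
      (EuclideanSpace ℝ (Fin d) →L[ℝ] ℝ) :=
    fun x u => (w x u * s2⁻¹) • innerSL ℝ (β • u - x) with hDwdef
  have hDw : ∀ u x, HasFDerivAt (fun x => w x u) (Dw x u) x := by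
    intro u x
    have h0 : HasFDerivAt (fun x : EuclideanSpace ℝ (Fin d) => x - β • u)
        (ContinuousLinearMap.id ℝ _) x := (hasFDerivAt_id x).sub_const _
    have h2 := (h0.norm_sq.const_mul (-(2*s2))⁻¹).exp
    have heq : (fun x : EuclideanSpace ℝ (Fin d) =>
        Real.exp ((-(2*s2))⁻¹ * ‖x - β • u‖ ^ 2)) = fun x => w x u := by
      funext z; rw [hw]; ring_nf
    rw [heq] at h2
    refine h2.congr_fderiv ?_
    ext y
    have hxy : ((-(2*s2))⁻¹ * ‖x - β • u‖ ^ 2) = -‖x - β • u‖ ^ 2 / (2 * s2) := by ring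
    simp only [hDwdef, ContinuousLinearMap.smul_apply, ContinuousLinearMap.comp_apply,
      ContinuousLinearMap.coe_id', id_eq, innerSL_apply_apply, smul_eq_mul, hxy, hw,
      ContinuousLinearMap.coe_smul', Pi.smul_apply]
    rw [show (β • u - x) = -(x - β • u) by abel, inner_neg_left]
    push_cast
    ring
  have hDwnorm : ∀ x u, ‖Dw x u‖ ≤ s2⁻¹ * (|β| * ‖u‖ + ‖x‖) := by
    intro x u
    show ‖(w x u * s2⁻¹) • innerSL ℝ (β • u - x)‖ ≤ _
    refine le_trans (ContinuousLinearMap.opNorm_smul_le _ _) ?_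
    rw [innerSL_apply_norm]
    have h1 : ‖w x u * s2⁻¹‖ ≤ s2⁻¹ := by
      rw [Real.norm_eq_abs, abs_mul, abs_of_pos (hwpos x u),
        abs_of_pos (inv_pos.2 hs2pos)]
      nlinarith [hwpos x u, hwle x u, inv_pos.2 hs2pos]
    have h2 : ‖β • u - x‖ ≤ |β| * ‖u‖ + ‖x‖ := by
      calc ‖β • u - x‖ ≤ ‖β • u‖ + ‖x‖ := norm_sub_le _ _
        _ = |β| * ‖u‖ + ‖x‖ := by rw [norm_smul, Real.norm_eq_abs]
    apply mul_le_mul h1 h2 (norm_nonneg _)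
    positivity
  have hDwcont : ∀ x, Continuous (fun u => Dw x u) := by
    intro x
    show Continuous fun u => (w x u * s2⁻¹) • innerSL ℝ (β • u - x)
    refine Continuous.smul (f := fun u => w x u * s2⁻¹) (g := fun u => innerSL ℝ (β • u - x)) ?_ ?_
    · exact (hwcont x).mul continuous_const
    · exact (innerSL ℝ).continuous.comp (by fun_prop)
  have hint_w : ∀ x, Integrable (fun u => w x u) ν := by
    intro x
    refine (integrable_const (1 : ℝ)).mono' ((hwcont x).aestronglyMeasurable) ?_
    filter_upwards with u
    rw [Real.norm_eq_abs, abs_of_pos (hwpos x u)]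
    exact hwle x u
  have hint_wu : ∀ x, Integrable (fun u => w x u • u) ν := by
    intro x
    refine (integrable_const R).mono' (((hwcont x).smul continuous_id).aestronglyMeasurable) ?_
    filter_upwards [hnorm] with u hu
    rw [norm_smul, Real.norm_eq_abs, abs_of_pos (hwpos x u)]
    calc w x u * ‖u‖ ≤ 1 * R :=
          mul_le_mul (hwle x u) hu (norm_nonneg _) zero_le_one
      _ = R := one_mul R
  have hint_Dw : ∀ x, Integrable (fun u => Dw x u) ν := by
    intro x
    refine (integrable_const (s2⁻¹ * (|β| * R + ‖x‖))).mono'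
      ((hDwcont x).aestronglyMeasurable) ?_
    filter_upwards [hnorm] with u hu
    refine (hDwnorm x u).trans ?_
    have h2 : |β| * ‖u‖ ≤ |β| * R := by gcongr
    have h3 : (0:ℝ) ≤ s2⁻¹ := le_of_lt (inv_pos.2 hs2pos)
    nlinarith
  have hDwRcont : ∀ x, Continuous fun u => (Dw x u).smulRight u := by
    intro x
    exact isBoundedBilinearMap_smulRight.continuous.comp ((hDwcont x).prodMk continuous_id)
  have hint_DwR : ∀ x, Integrable (fun u => (Dw x u).smulRight u) ν := by
    intro x
    refine (integrable_const (s2⁻¹ * (|β| * R + ‖x‖) * R)).mono'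
      (hDwRcont x).aestronglyMeasurable ?_
    filter_upwards [hnorm] with u hu
    rw [ContinuousLinearMap.norm_smulRight_apply]
    have h1 := hDwnorm x u
    have h2 : |β| * ‖u‖ ≤ |β| * R := by gcongr
    have h3 : (0:ℝ) ≤ s2⁻¹ := le_of_lt (inv_pos.2 hs2pos)
    have h4 : ‖Dw x u‖ ≤ s2⁻¹ * (|β| * R + ‖x‖) := by nlinarith
    exact mul_le_mul h4 hu (norm_nonneg u)
      (mul_nonneg h3 (add_nonneg (mul_nonneg (abs_nonneg β) hRnn) (norm_nonneg x)))
  set Z : EuclideanSpace ℝ (Fin d) → ℝ := fun x => ∫ u, w x u ∂ν with hZdef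
  set M : EuclideanSpace ℝ (Fin d) → EuclideanSpace ℝ (Fin d) :=
    fun x => ∫ u, w x u • u ∂ν with hMdef
  have hZpos : ∀ x, 0 < Z x := by
    intro x
    rw [hZdef]
    rw [integral_pos_iff_support_of_nonneg_ae
      (Filter.Eventually.of_forall fun u => (hwpos x u).le) (hint_w x)]
    have hsupp : Function.support (fun u => w x u) = Set.univ := by
      ext u; simp [Function.mem_support, (hwpos x u).ne']
    rw [hsupp]
    simp
  have hZne : ∀ x, Z x ≠ 0 := fun x => (hZpos x).ne'
  have hZderiv : ∀ x, HasFDerivAt Z (∫ u, Dw x u ∂ν) x := by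
    intro x₀
    refine hasFDerivAt_integral_of_dominated_of_fderiv_le (s := Metric.ball x₀ 1)
      (F' := fun x u => Dw x u) (bound :=
      fun _ => s2⁻¹ * (|β| * R + (‖x₀‖ + 1))) (Metric.ball_mem_nhds x₀ one_pos)
      (Filter.Eventually.of_forall fun x => (hwcont x).aestronglyMeasurable)
      (hint_w x₀) ((hDwcont x₀).aestronglyMeasurable) ?_ (integrable_const _) ?_
    · filter_upwards [hnorm] with u hu x hx
      refine (hDwnorm x u).trans ?_
      have hxb : ‖x‖ ≤ ‖x₀‖ + 1 := by
        have hb := mem_ball_iff_norm.1 hx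
        calc ‖x‖ = ‖x₀ + (x - x₀)‖ := by rw [add_sub_cancel]
          _ ≤ ‖x₀‖ + ‖x - x₀‖ := norm_add_le _ _
          _ ≤ ‖x₀‖ + 1 := by linarith
      have h2 : |β| * ‖u‖ ≤ |β| * R := by gcongr
      have h3 : (0:ℝ) ≤ s2⁻¹ := le_of_lt (inv_pos.2 hs2pos)
      exact mul_le_mul_of_nonneg_left (add_le_add h2 hxb) h3
    · exact Filter.Eventually.of_forall fun u x _ => hDw u x
  have hMderiv : ∀ x, HasFDerivAt M (∫ u, (Dw x u).smulRight u ∂ν) x := by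
    intro x₀
    refine hasFDerivAt_integral_of_dominated_of_fderiv_le (s := Metric.ball x₀ 1)
      (F' := fun x u => (Dw x u).smulRight u) (bound :=
      fun _ => s2⁻¹ * (|β| * R + (‖x₀‖ + 1)) * R) (Metric.ball_mem_nhds x₀ one_pos)
      (Filter.Eventually.of_forall fun x =>
        ((hwcont x).smul continuous_id).aestronglyMeasurable)
      (hint_wu x₀) (hDwRcont x₀).aestronglyMeasurable ?_ (integrable_const _) ?_
    · filter_upwards [hnorm] with u hu x hx
      rw [ContinuousLinearMap.norm_smulRight_apply]
      have hxb : ‖x‖ ≤ ‖x₀‖ + 1 := by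
        have hb := mem_ball_iff_norm.1 hx
        calc ‖x‖ = ‖x₀ + (x - x₀)‖ := by rw [add_sub_cancel]
          _ ≤ ‖x₀‖ + ‖x - x₀‖ := norm_add_le _ _
          _ ≤ ‖x₀‖ + 1 := by linarith
      have h1 := hDwnorm x u
      have h2 : |β| * ‖u‖ ≤ |β| * R := by gcongr
      have h3 : (0:ℝ) ≤ s2⁻¹ := le_of_lt (inv_pos.2 hs2pos)
      have h4 : ‖Dw x u‖ ≤ s2⁻¹ * (|β| * R + (‖x₀‖ + 1)) :=
        (hDwnorm x u).trans (mul_le_mul_of_nonneg_left (add_le_add h2 hxb) h3)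
      exact mul_le_mul h4 hu (norm_nonneg u)
        (mul_nonneg h3 (add_nonneg (mul_nonneg (abs_nonneg β) hRnn)
          (by positivity)))
    · filter_upwards with u x _
      simpa using (hDw u x).smul_const u
  have hubareq : ubar = fun x => (Z x)⁻¹ • M x := funext hubar
  have hUderiv : ∀ x, HasFDerivAt ubar
      ((Z x)⁻¹ • (∫ u, (Dw x u).smulRight u ∂ν) +
        ((-((Z x) ^ 2)⁻¹) • (∫ u, Dw x u ∂ν)).smulRight (M x)) x := by
    intro x
    rw [hubareq]
    have hinv : HasFDerivAt (fun x => (Z x)⁻¹)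
        ((-((Z x) ^ 2)⁻¹) • (∫ u, Dw x u ∂ν)) x := by
      have hcomp := (hasDerivAt_inv (hZne x)).comp_hasFDerivAt x (hZderiv x)
      simpa only [Function.comp_def] using hcomp
    exact hinv.smul (hMderiv x)
  constructor
  · exact fun x => (hUderiv x).differentiableAt
  · intro x y
    rw [(hUderiv x).fderiv]
    have happly : ∀ u, Dw x u y = w x u * s2⁻¹ * (β * ⟪u, y⟫ - ⟪x, y⟫) := by
      intro u
      simp only [hDwdef, ContinuousLinearMap.smul_apply, innerSL_apply_apply, smul_eq_mul]
      rw [inner_sub_left, real_inner_smul_left]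
    have hinnercont : Continuous fun u : EuclideanSpace ℝ (Fin d) => (⟪u, y⟫ : ℝ) :=
      continuous_id.inner continuous_const
    have hint_wuy : Integrable (fun u => (w x u * ⟪u, y⟫) • u) ν := by
      refine (integrable_const (R * ‖y‖ * R)).mono'
        ((((hwcont x).mul hinnercont).smul continuous_id).aestronglyMeasurable) ?_
      filter_upwards [hnorm] with u hu
      rw [norm_smul, Real.norm_eq_abs, abs_mul, abs_of_pos (hwpos x u)]
      have h1 : |(⟪u, y⟫ : ℝ)| ≤ ‖u‖ * ‖y‖ := abs_real_inner_le_norm u y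
      have hA : |(⟪u, y⟫ : ℝ)| ≤ R * ‖y‖ :=
        h1.trans (mul_le_mul_of_nonneg_right hu (norm_nonneg y))
      calc w x u * |(⟪u, y⟫ : ℝ)| * ‖u‖ ≤ 1 * (R * ‖y‖) * R := by
            refine mul_le_mul (mul_le_mul (hwle x u) hA (abs_nonneg _) zero_le_one)
              hu (norm_nonneg _) ?_
            exact mul_nonneg zero_le_one (mul_nonneg hRnn (norm_nonneg y))
        _ = R * ‖y‖ * R := by ring
    have hint_wy : Integrable (fun u => w x u * ⟪u, y⟫) ν := by
      refine (integrable_const (R * ‖y‖)).mono'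
        (((hwcont x).mul hinnercont).aestronglyMeasurable) ?_
      filter_upwards [hnorm] with u hu
      rw [Real.norm_eq_abs, abs_mul, abs_of_pos (hwpos x u)]
      have h1 : |(⟪u, y⟫ : ℝ)| ≤ ‖u‖ * ‖y‖ := abs_real_inner_le_norm u y
      have hA : |(⟪u, y⟫ : ℝ)| ≤ R * ‖y‖ :=
        h1.trans (mul_le_mul_of_nonneg_right hu (norm_nonneg y))
      calc w x u * |(⟪u, y⟫ : ℝ)| ≤ 1 * (R * ‖y‖) :=
            mul_le_mul (hwle x u) hA (abs_nonneg _) zero_le_one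
        _ = R * ‖y‖ := one_mul _
    -- evaluate the two integrals of CLMs at y
    have hMy : (∫ u, (Dw x u).smulRight u ∂ν) y =
        (s2⁻¹ * β) • (∫ u, (w x u * ⟪u, y⟫) • u ∂ν) - (s2⁻¹ * ⟪x, y⟫) • M x := by
      rw [ContinuousLinearMap.integral_apply (hint_DwR x)]
      have hpt : ∀ u, (Dw x u).smulRight u y =
          (s2⁻¹ * β) • ((w x u * ⟪u, y⟫) • u) - (s2⁻¹ * ⟪x, y⟫) • (w x u • u) := by
        intro u
        rw [ContinuousLinearMap.smulRight_apply, happly, smul_smul, smul_smul,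
          ← sub_smul]
        congr 1
        ring
      have hI1 : Integrable (fun u => (s2⁻¹ * β) • ((w x u * ⟪u, y⟫) • u)) ν :=
        hint_wuy.smul (s2⁻¹ * β)
      have hI2 : Integrable (fun u => (s2⁻¹ * ⟪x, y⟫) • (w x u • u)) ν :=
        (hint_wu x).smul (s2⁻¹ * ⟪x, y⟫)
      rw [integral_congr_ae (Filter.Eventually.of_forall hpt),
        integral_sub hI1 hI2, integral_smul, integral_smul]
    have hZy : (∫ u, Dw x u ∂ν) y =
        (s2⁻¹ * β) * (∫ u, w x u * ⟪u, y⟫ ∂ν) - (s2⁻¹ * ⟪x, y⟫) * Z x := by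
      rw [ContinuousLinearMap.integral_apply (hint_Dw x)]
      have hpt : ∀ u, Dw x u y =
          (s2⁻¹ * β) * (w x u * ⟪u, y⟫) - (s2⁻¹ * ⟪x, y⟫) * w x u := by
        intro u; rw [happly]; ring
      have hI1 : Integrable (fun u => (s2⁻¹ * β) * (w x u * ⟪u, y⟫)) ν :=
        hint_wy.const_mul _
      have hI2 : Integrable (fun u => (s2⁻¹ * ⟪x, y⟫) * w x u) ν :=
        (hint_w x).const_mul _
      rw [integral_congr_ae (Filter.Eventually.of_forall hpt),
        integral_sub hI1 hI2, integral_const_mul, integral_const_mul]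
    have hIy : (∫ u, w x u * ⟪u, y⟫ ∂ν) = ⟪M x, y⟫ := by
      have hswap := integral_inner (𝕜 := ℝ) (hint_wu x) y
      have hpt : ∀ u, (⟪y, w x u • u⟫ : ℝ) = w x u * ⟪u, y⟫ := by
        intro u
        rw [real_inner_smul_right, real_inner_comm]
      calc (∫ u, w x u * ⟪u, y⟫ ∂ν) = ∫ u, (⟪y, w x u • u⟫ : ℝ) ∂ν := by
            exact integral_congr_ae (Filter.Eventually.of_forall fun u => (hpt u).symm)
        _ = ⟪y, M x⟫ := hswap
        _ = ⟪M x, y⟫ := real_inner_comm _ _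
    have hub : ubar x = (Z x)⁻¹ • M x := hubar x
    have hubin : (⟪ubar x, y⟫ : ℝ) = (Z x)⁻¹ * ⟪M x, y⟫ := by
      rw [hub, real_inner_smul_left]
    simp only [ContinuousLinearMap.add_apply, ContinuousLinearMap.coe_smul',
      Pi.smul_apply, ContinuousLinearMap.smulRight_apply, ContinuousLinearMap.smul_apply]
    rw [hMy, hZy, hIy, hubin, hub]
    have hZx := hZne x
    have hs2 := hs2pos.ne'
    simp only [hZdef, hMdef] at hZx ⊢
    match_scalars
    · field_simp
    · generalize (∫ u, w x u ∂ν) = Zv at hZx ⊢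
      have e1 : s2 * s2⁻¹ = 1 := mul_inv_cancel₀ hs2
      have e2 : Zv * Zv⁻¹ = 1 := mul_inv_cancel₀ hZx
      field_simp
      linear_combination (Zv * ⟪x, y⟫ - β * ⟪∫ u, w x u • u ∂ν, y⟫) *
        ((Zv * Zv⁻¹) ^ 2 * e1 + (Zv * Zv⁻¹ + 1) * e2)
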